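/- Let P be a 2-torsion free ring and let d : P → P be a commuting Jordan derivation. Then for all p₁, p₂ ∈ P, d(p₁p₂p₁) = 3·d(p₁)p₂p₁ + d(p₂)p₁² − d(p₁)p₁p₂. -/
import Mathlib


/-- Let P be a 2-torsion free ring and d a commuting Jordan derivation. Then
d(p₁p₂p₁) = 3·d(p₁)p₂p₁ + d(p₂)p₁² − d(p₁)p₁p₂. -/
theorem commuting_jordan_derivation_triple_left {P : Type*} [Ring P]
    (htf : ∀ p : P, 2 • p = 0 → p = 0) (d : P → P)
    (hadd : ∀ x y : P, d (x + y) = d x + d y)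
    (hJ : ∀ p : P, d (p ^ 2) = d p * p + p * d p)
    (hC : ∀ p : P, d p * p = p * d p) :
    ∀ p₁ p₂ : P,
      d (p₁ * p₂ * p₁) = 3 • (d p₁ * p₂ * p₁) + d p₂ * p₁ ^ 2 - d p₁ * p₁ * p₂ := by
  -- linearized commuting condition
  have L : ∀ x y : P, d x * y + d y * x = x * d y + y * d x := by
    intro x y
    have h := hC (x + y)
    rw [hadd] at h
    linear_combination (norm := noncomm_ring) h - hC x - hC y
  -- linearized Jordan condition
  have JL : ∀ x y : P, d (x * y + y * x) = d x * y + x * d y + d y * x + y * d x := by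
    intro x y
    have e : (x + y) ^ 2 = x ^ 2 + (x * y + y * x) + y ^ 2 := by noncomm_ring
    have h := hJ (x + y)
    rw [e, hadd (x ^ 2 + (x * y + y * x)) (y ^ 2), hadd (x ^ 2) (x * y + y * x), hadd x y] at h
    linear_combination (norm := noncomm_ring) h - hJ x - hJ y
  -- key consequence of the commuting condition: d a anticommutes appropriately
  have star : ∀ a b : P, d a * (a * b) + a * b * d a = d a * (b * a) + b * a * d a := by
    intro a b
    linear_combination (norm := noncomm_ring)
      L (a ^ 2) b - (hJ a) * b + b * (hJ a) - a * (L a b) - (L a b) * a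
  intro a b
  have H1 := JL a (a * b + b * a)
  have H2 := JL a b
  have H3 : d (a * (a * b + b * a) + (a * b + b * a) * a)
      = d (a ^ 2 * b + b * a ^ 2) + d (a * b * a) + d (a * b * a) := by
    have e : a * (a * b + b * a) + (a * b + b * a) * a
        = a ^ 2 * b + b * a ^ 2 + a * b * a + a * b * a := by noncomm_ring
    rw [e, hadd, hadd]
  have H4 := JL (a ^ 2) b
  have H5 := hJ a
  have H6 := L a b
  have H7 := hC a
  have H8 := star a b
  have key : 2 • (d (a * b * a)
      - (3 • (d a * b * a) + d b * a ^ 2 - d a * a * b)) = 0 := by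
    linear_combination (norm := noncomm_ring)
      H1 - H3 - H4 + a * H2 + H2 * a - H5 * b - b * H5
        - 2 * (H6 * a) - 2 * (b * H7) + 2 * H8
  have := htf _ key
  exact sub_eq_zero.mp this
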